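/- The extended universal-disjunction scope rule is sound: for teams X of a model M with at least two elements, with x not free in ψ and y, z fresh variables, M ⊨_X ∀x φ(x,𝗏) ∨ ψ(𝗏) if and only if M ⊨_X ∃y∃z∀x((φ ∧ y=z) ∨ (ψ ∧ y≠z)). -/
import Mathlib


namespace TeamSem

variable {M : Type}

/-- A team is a set of assignments (variables are natural numbers). -/
abbrev Team (M : Type) := Set (ℕ → M)

/-- Lax existential extension of a team `X` along variable `x` by a choice function `F`. -/
def extT (X : Team M) (x : ℕ) (F : (ℕ → M) → Set M) : Team M :=
  {t | ∃ s ∈ X, ∃ a ∈ F s, t = Function.update s x a}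

/-- Universal extension of a team `X` along variable `x`. -/
def extAll (X : Team M) (x : ℕ) : Team M :=
  {t | ∃ s ∈ X, ∃ a : M, t = Function.update s x a}

/-- First-order formulas with semantic atoms depending on a finite list of variables. -/
inductive FOForm (M : Type) where
  | atom : List ℕ → (List M → Prop) → FOForm M
  | neg  : FOForm M → FOForm M
  | and  : FOForm M → FOForm M → FOForm M
  | or   : FOForm M → FOForm M → FOForm M
  | ex   : ℕ → FOForm M → FOForm M
  | all  : ℕ → FOForm M → FOForm M

/-- Tarskian (single-assignment) satisfaction for first-order formulas. -/
def FOForm.sat : FOForm M → (ℕ → M) → Prop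
  | .atom l p, s => p (l.map s)
  | .neg φ, s => ¬ FOForm.sat φ s
  | .and φ ψ, s => FOForm.sat φ s ∧ FOForm.sat ψ s
  | .or φ ψ, s => FOForm.sat φ s ∨ FOForm.sat ψ s
  | .ex x φ, s => ∃ a : M, FOForm.sat φ (Function.update s x a)
  | .all x φ, s => ∀ a : M, FOForm.sat φ (Function.update s x a)

/-- Free variables of a first-order formula. -/
def FOForm.fv : FOForm M → Set ℕ
  | .atom l _ => {v | v ∈ l}
  | .neg φ => FOForm.fv φ
  | .and φ ψ => FOForm.fv φ ∪ FOForm.fv ψ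
  | .or φ ψ => FOForm.fv φ ∪ FOForm.fv ψ
  | .ex x φ => FOForm.fv φ \ {x}
  | .all x φ => FOForm.fv φ \ {x}

/-- Formulas of inclusion logic: first-order formulas (with negation applied
only to first-order formulas), inclusion atoms, ∧, ∨, ∃, ∀. -/
inductive IncForm (M : Type) where
  | fo   : FOForm M → IncForm M
  | incl : List ℕ → List ℕ → IncForm M
  | and  : IncForm M → IncForm M → IncForm M
  | or   : IncForm M → IncForm M → IncForm M
  | ex   : ℕ → IncForm M → IncForm M
  | all  : ℕ → IncForm M → IncForm M

/-- Lax team semantics for inclusion logic. -/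
def IncForm.tsat : IncForm M → Team M → Prop
  | .fo α, X => ∀ s ∈ X, FOForm.sat α s
  | .incl xs ys, X => ∀ s ∈ X, ∃ s' ∈ X, xs.map s = ys.map s'
  | .and φ ψ, X => IncForm.tsat φ X ∧ IncForm.tsat ψ X
  | .or φ ψ, X => ∃ Y Z : Team M, X = Y ∪ Z ∧ IncForm.tsat φ Y ∧ IncForm.tsat ψ Z
  | .ex x φ, X => ∃ F : (ℕ → M) → Set M, (∀ s ∈ X, (F s).Nonempty) ∧
      IncForm.tsat φ (extT X x F)
  | .all x φ, X => IncForm.tsat φ (extAll X x)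

/-- Free variables of an inclusion logic formula. -/
def IncForm.fv : IncForm M → Set ℕ
  | .fo α => FOForm.fv α
  | .incl xs ys => {v | v ∈ xs ∨ v ∈ ys}
  | .and φ ψ => IncForm.fv φ ∪ IncForm.fv ψ
  | .or φ ψ => IncForm.fv φ ∪ IncForm.fv ψ
  | .ex x φ => IncForm.fv φ \ {x}
  | .all x φ => IncForm.fv φ \ {x}

/-- A block of existential quantifiers. -/
def IncForm.exs (l : List ℕ) (φ : IncForm M) : IncForm M := l.foldr IncForm.ex φ

/-- A block of universal quantifiers. -/
def IncForm.alls (l : List ℕ) (φ : IncForm M) : IncForm M := l.foldr IncForm.all φ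

/-- The first-order equality atom `x = y`. -/
def eqAtom (x y : ℕ) : FOForm M :=
  .atom [x, y] (fun l => match l with | [a, b] => a = b | _ => False)

/-- The first-order inequality atom `x ≠ y`. -/
def neqAtom (x y : ℕ) : FOForm M :=
  .atom [x, y] (fun l => match l with | [a, b] => a ≠ b | _ => False)

/-- First-order biconditional `α ↔ β`, i.e. `(¬α ∨ β) ∧ (¬β ∨ α)`. -/
def iffF (a b : FOForm M) : FOForm M := .and (.or (.neg a) b) (.or (.neg b) a)

/-- Conjunction of a list of inclusion logic formulas. -/
def bigAndI (l : List (IncForm M)) : IncForm M :=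
  l.foldr IncForm.and (.fo (.atom [] (fun _ => True)))

/-- Disjunction of a list of inclusion logic formulas (empty disjunction is `⊥`). -/
def bigOrI (l : List (IncForm M)) : IncForm M :=
  l.foldr IncForm.or (.fo (.atom [] (fun _ => False)))

/-! ### Auxiliary lemmas -/

/-- Agreement of two assignments on a set of variables. -/
def agreeOn (V : Set ℕ) (s t : ℕ → M) : Prop := ∀ v ∈ V, s v = t v

lemma agreeOn.symm {V : Set ℕ} {s t : ℕ → M} (h : agreeOn V s t) : agreeOn V t s :=
  fun v hv => (h v hv).symm

lemma agreeOn.mono {V W : Set ℕ} {s t : ℕ → M} (h : agreeOn V s t) (hW : W ⊆ V) :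
    agreeOn W s t := fun v hv => h v (hW hv)

lemma agreeOn.update {V : Set ℕ} {s t : ℕ → M} (h : agreeOn V s t) (x : ℕ) (a : M) :
    agreeOn (V ∪ {x}) (Function.update s x a) (Function.update t x a) := by
  intro v hv
  by_cases hvx : v = x
  · subst hvx; simp
  · rw [Function.update_of_ne hvx, Function.update_of_ne hvx]
    rcases hv with hv | hv
    · exact h v hv
    · exact absurd hv hvx

lemma FOForm.sat_agree : ∀ (α : FOForm M) {s t : ℕ → M},
    agreeOn (FOForm.fv α) s t → (FOForm.sat α s ↔ FOForm.sat α t) := by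
  intro α
  induction α with
  | atom l p =>
    intro s t h
    simp only [FOForm.sat]
    have : l.map s = l.map t := List.map_congr_left (fun v hv => h v hv)
    rw [this]
  | neg φ ih =>
    intro s t h
    simp only [FOForm.sat]
    rw [ih h]
  | and φ ψ ihφ ihψ =>
    intro s t h
    simp only [FOForm.sat]
    rw [ihφ (h.mono Set.subset_union_left), ihψ (h.mono Set.subset_union_right)]
  | or φ ψ ihφ ihψ =>
    intro s t h
    simp only [FOForm.sat]
    rw [ihφ (h.mono Set.subset_union_left), ihψ (h.mono Set.subset_union_right)]
  | ex w φ ih =>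
    intro s t h
    simp only [FOForm.sat]
    constructor <;> rintro ⟨a, ha⟩ <;> refine ⟨a, ?_⟩
    · rw [← ih ?_]; exact ha
      intro v hv
      by_cases hvw : v = w
      · subst hvw; simp
      · rw [Function.update_of_ne hvw, Function.update_of_ne hvw]
        exact h v ⟨hv, hvw⟩
    · rw [ih ?_]; exact ha
      intro v hv
      by_cases hvw : v = w
      · subst hvw; simp
      · rw [Function.update_of_ne hvw, Function.update_of_ne hvw]
        exact h v ⟨hv, hvw⟩
  | all w φ ih =>
    intro s t h
    simp only [FOForm.sat]
    constructor <;> intro ha a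
    · rw [← ih ?_]; exact ha a
      intro v hv
      by_cases hvw : v = w
      · subst hvw; simp
      · rw [Function.update_of_ne hvw, Function.update_of_ne hvw]
        exact h v ⟨hv, hvw⟩
    · rw [ih ?_]; exact ha a
      intro v hv
      by_cases hvw : v = w
      · subst hvw; simp
      · rw [Function.update_of_ne hvw, Function.update_of_ne hvw]
        exact h v ⟨hv, hvw⟩

/-- Locality: team satisfaction only depends on the values of assignments on a
superset of the free variables (for lax semantics, teams related by mutual
agreement witnesses). -/
lemma tsat_local (φ : IncForm M) : ∀ (V : Set ℕ), IncForm.fv φ ⊆ V →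
    ∀ X X' : Team M,
    (∀ t ∈ X, ∃ t' ∈ X', agreeOn V t t') →
    (∀ t' ∈ X', ∃ t ∈ X, agreeOn V t t') →
    IncForm.tsat φ X → IncForm.tsat φ X' := by
  induction φ with
  | fo α =>
    intro V hV X X' _ h2 hX s' hs'
    obtain ⟨t, ht, hagr⟩ := h2 s' hs'
    exact (FOForm.sat_agree α (hagr.mono hV)).1 (hX t ht)
  | incl xs ys =>
    intro V hV X X' h1 h2 hX s' hs'
    obtain ⟨t, ht, hagr⟩ := h2 s' hs'
    obtain ⟨t', ht', heq⟩ := hX t ht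
    obtain ⟨s'', hs'', hagr'⟩ := h1 t' ht'
    refine ⟨s'', hs'', ?_⟩
    have h1' : xs.map s' = xs.map t := List.map_congr_left
      (fun v hv => (hagr.symm v (hV (Or.inl hv))))
    have h2' : ys.map t' = ys.map s'' := List.map_congr_left
      (fun v hv => hagr' v (hV (Or.inr hv)))
    rw [h1', heq, h2']
  | and φ ψ ihφ ihψ =>
    intro V hV X X' h1 h2 hX
    exact ⟨ihφ V (fun v hv => hV (Or.inl hv)) X X' h1 h2 hX.1,
           ihψ V (fun v hv => hV (Or.inr hv)) X X' h1 h2 hX.2⟩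
  | or φ ψ ihφ ihψ =>
    intro V hV X X' h1 h2 hX
    obtain ⟨Y, Z, hXYZ, hY, hZ⟩ := hX
    refine ⟨{t' ∈ X' | ∃ t ∈ Y, agreeOn V t t'}, {t' ∈ X' | ∃ t ∈ Z, agreeOn V t t'},
      ?_, ?_, ?_⟩
    · ext t'
      constructor
      · intro ht'
        obtain ⟨t, ht, hagr⟩ := h2 t' ht'
        rw [hXYZ] at ht
        rcases ht with ht | ht
        · exact Or.inl ⟨ht', t, ht, hagr⟩
        · exact Or.inr ⟨ht', t, ht, hagr⟩
      · rintro (⟨ht', _⟩ | ⟨ht', _⟩) <;> exact ht'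
    · refine ihφ V (fun v hv => hV (Or.inl hv)) Y _ ?_ ?_ hY
      · intro t ht
        obtain ⟨t', ht', hagr⟩ := h1 t (hXYZ ▸ Or.inl ht : t ∈ X)
        exact ⟨t', ⟨ht', t, ht, hagr⟩, hagr⟩
      · rintro t' ⟨_, t, ht, hagr⟩
        exact ⟨t, ht, hagr⟩
    · refine ihψ V (fun v hv => hV (Or.inr hv)) Z _ ?_ ?_ hZ
      · intro t ht
        obtain ⟨t', ht', hagr⟩ := h1 t (hXYZ ▸ Or.inr ht : t ∈ X)
        exact ⟨t', ⟨ht', t, ht, hagr⟩, hagr⟩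
      · rintro t' ⟨_, t, ht, hagr⟩
        exact ⟨t, ht, hagr⟩
  | ex w φ ih =>
    intro V hV X X' h1 h2 hX
    obtain ⟨F, hFne, hF⟩ := hX
    refine ⟨fun t' => {a | ∃ t ∈ X, agreeOn V t t' ∧ a ∈ F t}, ?_, ?_⟩
    · intro s' hs'
      obtain ⟨t, ht, hagr⟩ := h2 s' hs'
      obtain ⟨a, ha⟩ := hFne t ht
      exact ⟨a, t, ht, hagr, ha⟩
    · refine ih (V ∪ {w}) ?_ (extT X w F) _ ?_ ?_ hF
      · intro v hv
        by_cases hvw : v = w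
        · exact Or.inr hvw
        · exact Or.inl (hV ⟨hv, hvw⟩)
      · rintro u ⟨t, ht, a, ha, rfl⟩
        obtain ⟨t', ht', hagr⟩ := h1 t ht
        exact ⟨Function.update t' w a, ⟨t', ht', a, ⟨t, ht, hagr, ha⟩, rfl⟩,
          hagr.update w a⟩
      · rintro u' ⟨t', ht', a, ⟨t, ht, hagr, haF⟩, rfl⟩
        exact ⟨Function.update t w a, ⟨t, ht, a, haF, rfl⟩, hagr.update w a⟩
  | all w φ ih =>
    intro V hV X X' h1 h2 hX
    refine ih (V ∪ {w}) ?_ (extAll X w) _ ?_ ?_ hX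
    · intro v hv
      by_cases hvw : v = w
      · exact Or.inr hvw
      · exact Or.inl (hV ⟨hv, hvw⟩)
    · rintro u ⟨t, ht, a, rfl⟩
      obtain ⟨t', ht', hagr⟩ := h1 t ht
      exact ⟨Function.update t' w a, ⟨t', ht', a, rfl⟩, hagr.update w a⟩
    · rintro u' ⟨t', ht', a, rfl⟩
      obtain ⟨t, ht, hagr⟩ := h2 t' ht'
      exact ⟨Function.update t w a, ⟨t, ht, a, rfl⟩, hagr.update w a⟩

lemma upd_eq_off {s s' : ℕ → M} {y : ℕ} {a a' : M}
    (h : Function.update s y a = Function.update s' y a') {v : ℕ} (hv : v ≠ y) :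
    s v = s' v := by
  have := congrFun h v
  rwa [Function.update_of_ne hv, Function.update_of_ne hv] at this

lemma eqAtom_sat {y z : ℕ} {s : ℕ → M} : FOForm.sat (eqAtom y z) s ↔ s y = s z :=
  Iff.rfl

lemma upd3_eval_y {x y z : ℕ} (hyx : y ≠ x) (hyz : y ≠ z) (s : ℕ → M) (b c d : M) :
    (Function.update (Function.update (Function.update s y b) z c) x d) y = b := by
  rw [Function.update_of_ne hyx, Function.update_of_ne hyz, Function.update_self]

lemma upd3_eval_z {x z : ℕ} (hzx : z ≠ x) (s : ℕ → M) (b c d : M) (y : ℕ) :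
    (Function.update (Function.update (Function.update s y b) z c) x d) z = c := by
  rw [Function.update_of_ne hzx, Function.update_self]

lemma upd3_agree {y z : ℕ} (x : ℕ) (s : ℕ → M) (b c d : M) :
    agreeOn {v | v ≠ y ∧ v ≠ z}
      (Function.update (Function.update (Function.update s y b) z c) x d)
      (Function.update s x d) := by
  rintro v ⟨hvy, hvz⟩
  by_cases hvx : v = x
  · subst hvx; simp
  · rw [Function.update_of_ne hvx, Function.update_of_ne hvx,
      Function.update_of_ne hvz, Function.update_of_ne hvy]

lemma upd3_agree' {x y z : ℕ} (s : ℕ → M) (b c d : M) :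
    agreeOn {v | v ≠ x ∧ v ≠ y ∧ v ≠ z} s
      (Function.update (Function.update (Function.update s y b) z c) x d) := by
  rintro v ⟨hvx, hvy, hvz⟩
  rw [Function.update_of_ne hvx, Function.update_of_ne hvz, Function.update_of_ne hvy]

lemma neqAtom_sat {y z : ℕ} {s : ℕ → M} : FOForm.sat (neqAtom y z) s ↔ s y ≠ s z :=
  Iff.rfl

/-- soundness of the extended universal-disjunction scope rule:
`∀x φ(x,𝗏) ∨ ψ(𝗏) ≡ ∃y∃z∀x((φ ∧ y=z) ∨ (ψ ∧ y≠z))` for fresh `y, z`,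
over models with at least two elements. -/
theorem all_or_extension (φ ψ : IncForm M) (x y z : ℕ) (X : Team M)
    (htwo : ∃ a b : M, a ≠ b)
    (hxψ : x ∉ IncForm.fv ψ)
    (hyz : y ≠ z) (hyx : y ≠ x) (hzx : z ≠ x)
    (hyφ : y ∉ IncForm.fv φ) (hyψ : y ∉ IncForm.fv ψ)
    (hzφ : z ∉ IncForm.fv φ) (hzψ : z ∉ IncForm.fv ψ) :
    IncForm.tsat (.or (.all x φ) ψ) X ↔
      IncForm.tsat (.ex y (.ex z (.all x
        (.or (.and φ (.fo (eqAtom y z))) (.and ψ (.fo (neqAtom y z))))))) X := by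
  obtain ⟨a, b, hab⟩ := htwo
  have hVφ : IncForm.fv φ ⊆ {v | v ≠ y ∧ v ≠ z} := by
    intro v hv
    exact ⟨fun h => hyφ (h ▸ hv), fun h => hzφ (h ▸ hv)⟩
  have hVψ : IncForm.fv ψ ⊆ {v | v ≠ x ∧ v ≠ y ∧ v ≠ z} := by
    intro v hv
    exact ⟨fun h => hxψ (h ▸ hv), fun h => hyψ (h ▸ hv), fun h => hzψ (h ▸ hv)⟩
  constructor
  · rintro ⟨Y, Z, hXYZ, hY, hZ⟩
    -- choose y := a everywhere; z := a over Y, z := b over Z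
    refine ⟨fun _ => ({a} : Set M), fun s _ => ⟨a, rfl⟩,
      fun t => {c | (∃ s ∈ Y, t = Function.update s y a ∧ c = a) ∨
                    (∃ s ∈ Z, t = Function.update s y a ∧ c = b)}, ?_, ?_⟩
    · rintro t ⟨s, hs, a', ha', rfl⟩
      have ha2 : a = a' := ha'.symm
      subst ha2
      rw [hXYZ] at hs
      rcases hs with hs | hs
      · exact ⟨a, Or.inl ⟨s, hs, rfl, rfl⟩⟩
      · exact ⟨b, Or.inr ⟨s, hs, rfl, rfl⟩⟩
    · -- the universal extension: split by u y = u z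
      set W : Team M := extAll (extT (extT X y (fun _ => ({a} : Set M))) z
        (fun t => {c | (∃ s ∈ Y, t = Function.update s y a ∧ c = a) ∨
                       (∃ s ∈ Z, t = Function.update s y a ∧ c = b)})) x with hW
      show IncForm.tsat _ W
      refine ⟨{u ∈ W | u y = u z}, {u ∈ W | u y ≠ u z}, ?_, ⟨?_, ?_⟩, ⟨?_, ?_⟩⟩
      · ext u
        constructor
        · intro hu
          by_cases h : u y = u z
          · exact Or.inl ⟨hu, h⟩
          · exact Or.inr ⟨hu, h⟩
        · rintro (⟨hu, _⟩ | ⟨hu, _⟩) <;> exact hu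
      · -- φ on the y = z part
        refine tsat_local φ {v | v ≠ y ∧ v ≠ z} hVφ (extAll Y x) _ ?_ ?_ hY
        · rintro u ⟨s, hs, d, rfl⟩
          refine ⟨Function.update (Function.update (Function.update s y a) z a) x d,
            ⟨⟨Function.update (Function.update s y a) z a,
              ⟨Function.update s y a, ⟨s, (by rw [hXYZ]; exact Or.inl hs : s ∈ X), a, rfl, rfl⟩,
                a, Or.inl ⟨s, hs, rfl, rfl⟩, rfl⟩, d, rfl⟩,
              by rw [upd3_eval_y hyx hyz, upd3_eval_z hzx]⟩,
            (upd3_agree x s a a d).symm⟩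
        · rintro u' ⟨⟨t2, ⟨t1, ⟨s, hs, a', ha', rfl⟩, c, hc, rfl⟩, d, rfl⟩, heq⟩
          have ha2 : a = a' := ha'.symm
          subst ha2
          rw [upd3_eval_y hyx hyz, upd3_eval_z hzx] at heq
          subst heq
          rcases hc with ⟨s', hs', ht1, _⟩ | ⟨s', hs', ht1, hcb⟩
          · refine ⟨Function.update s' x d, ⟨s', hs', d, rfl⟩, ?_⟩
            rintro v ⟨hvy, hvz⟩
            by_cases hvx : v = x
            · subst hvx; simp
            · rw [Function.update_of_ne hvx, Function.update_of_ne hvx,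
                Function.update_of_ne hvz, Function.update_of_ne hvy]
              exact (upd_eq_off ht1 hvy).symm
          · exact absurd hcb hab
      · -- y = z atom
        rintro u ⟨_, h⟩
        exact eqAtom_sat.2 h
      · -- ψ on the y ≠ z part
        refine tsat_local ψ {v | v ≠ x ∧ v ≠ y ∧ v ≠ z} hVψ Z _ ?_ ?_ hZ
        · intro s hs
          refine ⟨Function.update (Function.update (Function.update s y a) z b) x a,
            ⟨⟨Function.update (Function.update s y a) z b,
              ⟨Function.update s y a, ⟨s, (by rw [hXYZ]; exact Or.inr hs : s ∈ X), a, rfl, rfl⟩,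
                b, Or.inr ⟨s, hs, rfl, rfl⟩, rfl⟩, a, rfl⟩,
              by rw [upd3_eval_y hyx hyz, upd3_eval_z hzx]; exact hab⟩,
            upd3_agree' s a b a⟩
        · rintro u' ⟨⟨t2, ⟨t1, ⟨s, hs, a', ha', rfl⟩, c, hc, rfl⟩, d, rfl⟩, hne⟩
          have ha2 : a = a' := ha'.symm
          subst ha2
          rw [upd3_eval_y hyx hyz, upd3_eval_z hzx] at hne
          rcases hc with ⟨s', hs', ht1, hca⟩ | ⟨s', hs', ht1, hcb⟩
          · exact absurd hca.symm hne
          · subst hcb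
            refine ⟨s', hs', ?_⟩
            rintro v ⟨hvx, hvy, hvz⟩
            rw [Function.update_of_ne hvx, Function.update_of_ne hvz,
              Function.update_of_ne hvy]
            exact (upd_eq_off ht1 hvy).symm
      · -- y ≠ z atom
        rintro u ⟨_, h⟩
        exact neqAtom_sat.2 h
  · rintro ⟨Fy, hFy, Fz, hFz, hsat⟩
    obtain ⟨Y₁, Z₁, hWsplit, ⟨hφ₁, heq₁⟩, ⟨hψ₁, hne₁⟩⟩ := hsat
    -- split X according to whether the chosen y, z values can be equal
    refine ⟨{s ∈ X | ∃ c, c ∈ Fy s ∧ c ∈ Fz (Function.update s y c)},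
            {s ∈ X | ∃ b' c, b' ∈ Fy s ∧ c ∈ Fz (Function.update s y b') ∧ b' ≠ c},
            ?_, ?_, ?_⟩
    · ext s
      constructor
      · intro hs
        obtain ⟨b', hb'⟩ := hFy s hs
        obtain ⟨c, hc⟩ := hFz (Function.update s y b') ⟨s, hs, b', hb', rfl⟩
        by_cases h : b' = c
        · exact Or.inl ⟨hs, b', hb', h ▸ hc⟩
        · exact Or.inr ⟨hs, b', c, hb', hc, h⟩
      · rintro (⟨hs, _⟩ | ⟨hs, _⟩) <;> exact hs
    · -- ∀x φ on Y
      show IncForm.tsat φ _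
      refine tsat_local φ {v | v ≠ y ∧ v ≠ z} hVφ Y₁ _ ?_ ?_ hφ₁
      · -- every element of Y₁ has a counterpart in extAll Y x
        intro u hu
        have huW : u ∈ extAll (extT (extT X y Fy) z Fz) x := by rw [hWsplit]; exact Or.inl hu
        obtain ⟨t2, ⟨t1, ⟨s, hs, b', hb', rfl⟩, c, hc, rfl⟩, d, rfl⟩ := huW
        have heq : b' = c := by
          have := eqAtom_sat.1 (heq₁ _ hu)
          rwa [upd3_eval_y hyx hyz, upd3_eval_z hzx] at this
        subst heq
        exact ⟨Function.update s x d, ⟨s, ⟨hs, b', hb', hc⟩, d, rfl⟩,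
          upd3_agree x s b' b' d⟩
      · rintro u' ⟨s, ⟨hs, c, hc1, hc2⟩, d, rfl⟩
        have hmem : Function.update (Function.update (Function.update s y c) z c) x d
            ∈ extAll (extT (extT X y Fy) z Fz) x := ⟨Function.update (Function.update s y c) z c,
          ⟨Function.update s y c, ⟨s, hs, c, hc1, rfl⟩, c, hc2, rfl⟩, d, rfl⟩
        rw [hWsplit] at hmem
        rcases hmem with hm | hm
        · exact ⟨_, hm, (upd3_agree x s c c d)⟩
        · exfalso
          have := neqAtom_sat.1 (hne₁ _ hm)
          rw [upd3_eval_y hyx hyz, upd3_eval_z hzx] at this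
          exact this rfl
    · -- ψ on Z
      refine tsat_local ψ {v | v ≠ x ∧ v ≠ y ∧ v ≠ z} hVψ Z₁ _ ?_ ?_ hψ₁
      · intro u hu
        have huW : u ∈ extAll (extT (extT X y Fy) z Fz) x := by rw [hWsplit]; exact Or.inr hu
        obtain ⟨t2, ⟨t1, ⟨s, hs, b', hb', rfl⟩, c, hc, rfl⟩, d, rfl⟩ := huW
        have hne : b' ≠ c := by
          have := neqAtom_sat.1 (hne₁ _ hu)
          rwa [upd3_eval_y hyx hyz, upd3_eval_z hzx] at this
        exact ⟨s, ⟨hs, b', c, hb', hc, hne⟩, (upd3_agree' s b' c d).symm⟩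
      · rintro s ⟨hs, b', c, hb', hc, hbc⟩
        have hmem : Function.update (Function.update (Function.update s y b') z c) x a
            ∈ extAll (extT (extT X y Fy) z Fz) x := ⟨Function.update (Function.update s y b') z c,
          ⟨Function.update s y b', ⟨s, hs, b', hb', rfl⟩, c, hc, rfl⟩, a, rfl⟩
        rw [hWsplit] at hmem
        rcases hmem with hm | hm
        · exfalso
          have := eqAtom_sat.1 (heq₁ _ hm)
          rw [upd3_eval_y hyx hyz, upd3_eval_z hzx] at this
          exact hbc this
        · exact ⟨_, hm, (upd3_agree' s b' c a).symm⟩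

end TeamSem
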